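/- Let a < b be real numbers and let f : ℝ → ℝ be differentiable at every point of the closed interval [a, b]. Then (f(b) − f(a))/(b − a) is at most the essential supremum of f' over [a, b] with respect to Lebesgue measure. -/

import Mathlib

open MeasureTheory

/-- Mean value inequality for everywhere differentiable functions: if `f : ℝ → ℝ` is
differentiable at every point of `[a, b]` with `a < b`, then
`(f b - f a) / (b - a)` is at most the essential supremum of `f'` over `[a, b]`
with respect to Lebesgue measure, valued in the extended reals. -/
theorem stmt_3 {a b : ℝ} (hab : a < b) (f : ℝ → ℝ)
    (hdiff : ∀ x ∈ Set.Icc a b, DifferentiableAt ℝ f x) :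
    (((f b - f a) / (b - a) : ℝ) : EReal) ≤
      essSup (fun x => ((deriv f x : ℝ) : EReal)) (volume.restrict (Set.Icc a b)) := by
  set μ := volume.restrict (Set.Icc a b) with hμ
  set S := essSup (fun x => ((deriv f x : ℝ) : EReal)) μ with hS
  have hμne : μ ≠ 0 := by
    rw [hμ]
    simp only [ne_eq, Measure.restrict_eq_zero, Real.volume_Icc]
    simp [hab.le, sub_pos.2 hab, (sub_pos.2 hab).ne']
    exact hab
  have hael : ∀ᵐ x ∂μ, ((deriv f x : ℝ) : EReal) ≤ S := ae_le_essSup (Filter.isBoundedUnder_of ⟨⊤, fun _ => le_top⟩)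
  have hSbot : S ≠ ⊥ := by
    have : (ae μ).NeBot := ae_neBot.2 hμne
    obtain ⟨x, hx⟩ := hael.exists
    exact fun h => by simp [h] at hx
  rcases eq_or_ne S ⊤ with hStop | hStop
  · rw [hStop]; exact le_top
  -- S is a real number C
  obtain ⟨C, hC⟩ : ∃ C : ℝ, S = (C : EReal) := ⟨S.toReal, (EReal.coe_toReal hStop hSbot).symm⟩
  rw [hC]
  rw [EReal.coe_le_coe_iff]
  have haeC : ∀ᵐ x ∂μ, deriv f x ≤ C := by
    rw [hC] at hael
    filter_upwards [hael] with x hx using EReal.coe_le_coe_iff.1 hx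
  set φ : ℝ → ℝ := fun x => max (deriv f x) C with hφ
  have hφC : φ =ᵐ[μ] fun _ => C := by
    filter_upwards [haeC] with x hx using max_eq_right hx
  have hφint : IntegrableOn φ (Set.Icc a b) volume := by
    have : Integrable (fun _ : ℝ => C) μ :=
      integrableOn_const (by rw [Real.volume_Icc]; exact ENNReal.ofReal_ne_top)
    exact this.congr hφC.symm
  have key : f b - f a ≤ ∫ y in a..b, φ y := by
    apply intervalIntegral.sub_le_integral_of_hasDeriv_right_of_le hab.le
    · exact fun x hx => (hdiff x hx).continuousAt.continuousWithinAt
    · exact fun x hx =>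
        ((hdiff x (Set.mem_Icc_of_Ioo hx)).hasDerivAt).hasDerivWithinAt
    · exact hφint
    · exact fun x _ => le_max_left _ _
  have hint : (∫ y in a..b, φ y) = (b - a) * C := by
    have hae' : ∀ᵐ x ∂volume, x ∈ Set.uIoc a b → φ x = C := by
      have := (ae_restrict_iff' measurableSet_Icc).1 hφC
      filter_upwards [this] with x hx hx'
      exact hx (Set.mem_Icc_of_Ioc (by rwa [Set.uIoc_of_le hab.le] at hx'))
    rw [intervalIntegral.integral_congr_ae hae', intervalIntegral.integral_const, smul_eq_mul]
  rw [hint] at key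
  rw [div_le_iff₀ (sub_pos.2 hab)]
  linarith
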